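/- arXiv:1410.1219 — 2 statements merged into one kernel-verified Lean document; each statement's English description precedes it below -/
import Mathlib

section
/- Every 4-uniform hypergraph with maximum degree 3 has a conflict-free coloring with at most 3 colors; consequently, every 4-uniform hypergraph with maximum degree Δ ≥ 3 has a conflict-free coloring with at most Δ colors. -/
def hypDeg {V : Type} [DecidableEq V] (E : Finset (Finset V)) (v : V) : ℕ :=
  (E.filter (fun e => v ∈ e)).card

def ConflictFree {V α : Type} (E : Finset (Finset V)) (c : V → α) : Prop :=
  ∀ e ∈ E, ∃ v ∈ e, ∀ w ∈ e, c w = c v → w = v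

open Relation

set_option linter.unusedSectionVars false

namespace CFP

variable {α : Type} [DecidableEq α]

def Stp (r : α → α → Prop) (A : Finset α) (a b : α) : Prop := a ∈ A ∧ b ∈ A ∧ r a b

def Conn (r : α → α → Prop) (A : Finset α) : Prop :=
  ∀ u ∈ A, ∀ v ∈ A, ReflTransGen (Stp r A) u v

lemma stp_symm {r : α → α → Prop} (hr : Symmetric r) (A : Finset α) :
    Symmetric (Stp r A) := fun _ _ h => ⟨h.2.1, h.1, hr h.2.2⟩

lemma stp_mono {r r' : α → α → Prop} {A B : Finset α} (hAB : A ⊆ B)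
    (hrr : ∀ a b, r a b → r' a b) {a b : α} (h : Stp r A a b) : Stp r' B a b :=
  ⟨hAB h.1, hAB h.2.1, hrr _ _ h.2.2⟩

lemma rtg_mono {r r' : α → α → Prop} {A B : Finset α} (hAB : A ⊆ B)
    (hrr : ∀ a b, r a b → r' a b) {a b : α} (h : ReflTransGen (Stp r A) a b) :
    ReflTransGen (Stp r' B) a b :=
  ReflTransGen.mono (fun _ _ hs => stp_mono hAB hrr hs) _ _ h

/-- From a path between distinct points, extract a first step to a different point. -/
lemma first_step {R : α → α → Prop} {u v : α} (h : ReflTransGen R u v) (huv : u ≠ v) :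
    ∃ b, R u b ∧ b ≠ u := by
  induction h using ReflTransGen.head_induction_on with
  | refl => exact absurd rfl huv
  | head hab _ ih =>
    rename_i a c _
    by_cases hac : c = a
    · subst hac; exact ih huv
    · exact ⟨c, hab, hac⟩

/-- Hub lemma: if everybody in `A` reaches `s`, then `A` is connected. -/
lemma conn_of_hub {r : α → α → Prop} (hr : Symmetric r) {A : Finset α} {s : α}
    (h : ∀ w ∈ A, ReflTransGen (Stp r A) w s) : Conn r A := by
  intro u hu v hv
  exact (h u hu).trans ((@Std.Symm.symm _ _ (@ReflTransGen.stdSymm _ _ ⟨fun _ _ h' => (stp_symm hr A) h'⟩) _ _) (h v hv))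

/-- Every connected finite "graph" with at least two elements has, for each prescribed
element, a different removable element having a neighbour among the rest. -/
lemma exists_removable {r : α → α → Prop} (hr : Symmetric r) :
    ∀ (n : ℕ) (A : Finset α), A.card ≤ n → 2 ≤ A.card → Conn r A →
    ∀ ah ∈ A, ∃ x ∈ A, x ≠ ah ∧ Conn r (A.erase x) ∧ ∃ y ∈ A.erase x, r x y := by
  intro n
  induction n with
  | zero => intro A h1 h2; omega
  | succ n IH =>
    intro A hcard h2 hconn ah hah
    classical
    by_cases hA2 : A.card = 2
    · -- base case : two elements
      obtain ⟨g, hgA, hgah⟩ : ∃ g ∈ A, g ≠ ah := by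
        obtain ⟨a, b, hab, hA⟩ := Finset.card_eq_two.mp hA2
        subst hA
        rcases Finset.mem_insert.mp hah with h | h
        · exact ⟨b, by simp, by rw [h]; exact fun hh => hab hh.symm⟩
        · have hb : ah = b := Finset.mem_singleton.mp h
          exact ⟨a, by simp, by rw [hb]; exact hab⟩
      have herase : A.erase g = {ah} := by
        apply Finset.eq_singleton_iff_unique_mem.mpr
        constructor
        · exact Finset.mem_erase.mpr ⟨fun h => hgah h.symm, hah⟩
        · intro z hz
          obtain ⟨a, b, hab, hA⟩ := Finset.card_eq_two.mp hA2
          have hz' := Finset.mem_of_mem_erase hz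
          have hzg := Finset.ne_of_mem_erase hz
          subst hA
          simp only [Finset.mem_insert, Finset.mem_singleton] at hz' hgA hah
          rcases hz' with h | h <;> rcases hgA with h1 | h1 <;> rcases hah with h2 | h2 <;>
            simp_all <;> tauto
      have hrgah : r g ah := by
        obtain ⟨b, hb, hbne⟩ := first_step (hconn g hgA ah hah) hgah
        have hbA : b ∈ A := hb.2.1
        have : b = ah := by
          obtain ⟨a, b', hab, hA⟩ := Finset.card_eq_two.mp hA2
          subst hA
          simp only [Finset.mem_insert, Finset.mem_singleton] at hbA hgA hah
          rcases hbA with h | h <;> rcases hgA with h1 | h1 <;> rcases hah with h2 | h2 <;>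
            simp_all
        exact this ▸ hb.2.2
      refine ⟨g, hgA, hgah, ?_, ⟨ah, herase ▸ Finset.mem_singleton_self ah, hrgah⟩⟩
      rw [herase]
      intro u hu v hv
      rw [Finset.mem_singleton] at hu hv
      subst hu; subst hv; exact ReflTransGen.refl
    · -- inductive step: A.card ≥ 3
      have h3 : 3 ≤ A.card := by omega
      set A' := A.erase ah with hA'def
      have hcardA' : A'.card = A.card - 1 := Finset.card_erase_of_mem hah
      have hA'sub : A' ⊆ A := Finset.erase_subset ah A
      by_cases hC : Conn r A'
      · -- A' still connected
        obtain ⟨g, hg⟩ : ∃ g, g ∈ A' := Finset.card_pos.mp (by omega)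
        have hgah : g ≠ ah := Finset.ne_of_mem_erase hg
        obtain ⟨ah2, hstep, hah2ne⟩ := first_step (hconn ah hah g (hA'sub hg)) (Ne.symm hgah)
        have hah2A' : ah2 ∈ A' := Finset.mem_erase.mpr ⟨hah2ne, hstep.2.1⟩
        have hrahah2 : r ah ah2 := hstep.2.2
        obtain ⟨x, hxA', hxah2, hconnx, y, hy, hrxy⟩ :=
          IH A' (by omega) (by omega) hC ah2 hah2A'
        have hxah : x ≠ ah := Finset.ne_of_mem_erase hxA'
        have hsub2 : A'.erase x ⊆ A.erase x :=
          Finset.erase_subset_erase x hA'sub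
        have hah2in : ah2 ∈ A.erase x :=
          hsub2 (Finset.mem_erase.mpr ⟨fun h => hxah2 h.symm, hah2A'⟩)
        refine ⟨x, hA'sub hxA', hxah, ?_, ⟨y, hsub2 hy, hrxy⟩⟩
        apply conn_of_hub hr (s := ah2)
        intro w hw
        have hwA : w ∈ A := Finset.mem_of_mem_erase hw
        have hwx : w ≠ x := Finset.ne_of_mem_erase hw
        by_cases hwah : w = ah
        · subst hwah
          exact ReflTransGen.single ⟨hw, hah2in, hrahah2⟩
        · have hwA' : w ∈ A'.erase x :=
            Finset.mem_erase.mpr ⟨hwx, Finset.mem_erase.mpr ⟨hwah, hwA⟩⟩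
          have hah2x : ah2 ∈ A'.erase x := Finset.mem_erase.mpr ⟨fun h => hxah2 h.symm, hah2A'⟩
          exact rtg_mono hsub2 (fun _ _ h => h) (hconnx w hwA' ah2 hah2x)
      · -- A' disconnected
        have hCne : ¬ Conn r A' := hC
        have hex : ∃ f ∈ A', ∃ g ∈ A', ¬ ReflTransGen (Stp r A') f g := by
          by_contra hno
          push_neg at hno
          exact hCne (fun u hu v hv => hno u hu v hv)
        obtain ⟨f, hfA', g, hgA', hfg⟩ := hex
        set C := A'.filter (fun z => ReflTransGen (Stp r A') f z) with hCdef
        have hfC : f ∈ C := Finset.mem_filter.mpr ⟨hfA', ReflTransGen.refl⟩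
        have hgC : g ∉ C := fun h => hfg (Finset.mem_filter.mp h).2
        have hCsub : C ⊆ A' := Finset.filter_subset _ _
        have hahC : ah ∉ C := fun h => (Finset.ne_of_mem_erase (hCsub h)) rfl
        have closure : ∀ {z w}, z ∈ C → Stp r A' z w → w ∈ C := by
          intro z w hz hs
          exact Finset.mem_filter.mpr ⟨hs.2.1, (Finset.mem_filter.mp hz).2.tail hs⟩
        have claim2 : ∀ z, ReflTransGen (Stp r A') f z →
            z ∈ C ∧ ReflTransGen (Stp r C) f z := by
          intro z hz
          induction hz with
          | refl => exact ⟨hfC, ReflTransGen.refl⟩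
          | tail hb hstep ih =>
            have hzC := closure ih.1 hstep
            exact ⟨hzC, ih.2.tail ⟨ih.1, hzC, hstep.2.2⟩⟩
        have attach : ∀ z, ReflTransGen (Stp r A) f z → z ∈ C ∨ ∃ h ∈ C, r h ah := by
          intro z hz
          induction hz with
          | refl => exact Or.inl hfC
          | @tail b z' hb hstep ih =>
            rcases ih with hbC | hdone
            · 
              by_cases hzah : z' = ah
              · exact Or.inr ⟨b, hbC, hzah ▸ hstep.2.2⟩
              · exact Or.inl (closure hbC
                  ⟨hCsub hbC, Finset.mem_erase.mpr ⟨hzah, hstep.2.1⟩, hstep.2.2⟩)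
            · exact Or.inr hdone
        obtain ⟨h0, hh0C, hrh0ah⟩ : ∃ h ∈ C, r h ah := by
          rcases attach ah (hconn f (hA'sub hfA') ah hah) with h | h
          · exact absurd h hahC
          · exact h
        set B := insert ah C with hBdef
        have hCB : C ⊆ B := Finset.subset_insert _ _
        have hahB : ah ∈ B := Finset.mem_insert_self _ _
        have hBA : B ⊆ A := by
          intro q hq
          rcases Finset.mem_insert.mp hq with h | h
          · exact h ▸ hah
          · exact hA'sub (hCsub h)
        have hConnB : Conn r B := by
          apply conn_of_hub hr (s := f)
          intro w hw
          rcases Finset.mem_insert.mp hw with hwah | hwC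
          · subst hwah
            have step1 : Stp r B w h0 := ⟨hahB, hCB hh0C, hr hrh0ah⟩
            have pfh : ReflTransGen (Stp r C) f h0 := (claim2 h0 (Finset.mem_filter.mp hh0C).2).2
            exact (ReflTransGen.single step1).trans
              (ReflTransGen.mono (fun _ _ hs => stp_mono hCB (fun _ _ hh => hh) hs) _ _
                ((@Std.Symm.symm _ _ (@ReflTransGen.stdSymm _ _ ⟨fun _ _ h' => (stp_symm hr C) h'⟩) _ _) pfh))
          · exact (ReflTransGen.mono
              (fun _ _ hs => stp_mono hCB (fun _ _ hh => hh) hs) _ _ (claim2 w (Finset.mem_filter.mp hwC).2).2) |>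
              (@Std.Symm.symm _ _ (@ReflTransGen.stdSymm _ _ ⟨fun _ _ h' => (stp_symm hr B) h'⟩) _ _) |>
              (fun p => p)
        have hcardCB : B.card = C.card + 1 := Finset.card_insert_of_notMem hahC
        have hCssub : C ⊂ A' := ⟨hCsub, fun hsub => hgC (hsub hgA')⟩
        have hcardC : C.card < A'.card := Finset.card_lt_card hCssub
        have hcardB : B.card ≤ n := by omega
        have hB2 : 2 ≤ B.card := by
          have : 0 < C.card := Finset.card_pos.mpr ⟨f, hfC⟩
          omega
        obtain ⟨x, hxB, hxah, hconnBx, y, hyBx, hrxy⟩ := IH B hcardB hB2 hConnB ah hahB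
        have hxC : x ∈ C := by
          rcases Finset.mem_insert.mp hxB with h | h
          · exact absurd h hxah
          · exact h
        have hxA : x ∈ A := hBA hxB
        have hBerase : B.erase x ⊆ A.erase x := Finset.erase_subset_erase x hBA
        have hahex : ah ∈ A.erase x := Finset.mem_erase.mpr ⟨fun hh => hxah hh.symm, hah⟩
        refine ⟨x, hxA, fun hh => hxah hh, ?_, ⟨y, hBerase hyBx, hrxy⟩⟩
        apply conn_of_hub hr (s := ah)
        intro w hw
        have hwA : w ∈ A := Finset.mem_of_mem_erase hw
        have hwx : w ≠ x := Finset.ne_of_mem_erase hw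
        by_cases hwB : w ∈ B
        · have hwBx : w ∈ B.erase x := Finset.mem_erase.mpr ⟨hwx, hwB⟩
          have hahBx : ah ∈ B.erase x := Finset.mem_erase.mpr ⟨fun hh => hxah hh.symm, hahB⟩
          exact ReflTransGen.mono
            (fun _ _ hs => stp_mono hBerase (fun _ _ hh => hh) hs) _ _ (hconnBx w hwBx ah hahBx)
        · -- w outside B : stays in Good := insert ah (A' \ C)
          have hwah : w ≠ ah := fun hh => hwB (hh ▸ hahB)
          have hwA' : w ∈ A' := Finset.mem_erase.mpr ⟨hwah, hwA⟩
          have hwC : w ∉ C := fun hh => hwB (hCB hh)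
          set Good := insert ah (A' \ C) with hGdef
          have hwG : w ∈ Good := Finset.mem_insert.mpr (Or.inr (Finset.mem_sdiff.mpr ⟨hwA', hwC⟩))
          have hGsub : Good ⊆ A.erase x := by
            intro q hq
            rcases Finset.mem_insert.mp hq with h | h
            · exact h ▸ hahex
            · have hq1 := Finset.mem_sdiff.mp h
              refine Finset.mem_erase.mpr ⟨fun hh => hq1.2 (hh ▸ hxC), hA'sub hq1.1⟩
          have claim3 : ∀ z, ReflTransGen (Stp r A) w z →
              (z ∈ Good ∧ ReflTransGen (Stp r Good) w z) ∨ ReflTransGen (Stp r Good) w ah := by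
            intro z hz
            induction hz with
            | refl => exact Or.inl ⟨hwG, ReflTransGen.refl⟩
            | @tail b z' hb hstep ih =>
              rcases ih with ⟨hbG, pb⟩ | hdone
              · by_cases hzah : z' = ah
                · exact Or.inr (hzah ▸ pb.tail ⟨hbG, hzah ▸ Finset.mem_insert_self _ _,
                    hzah ▸ hstep.2.2⟩)
                · have hzA' : z' ∈ A' := Finset.mem_erase.mpr ⟨hzah, hstep.2.1⟩
                  by_cases hzC : z' ∈ C
                  · have hbah : b = ah := by
                      by_contra hbne
                      have hbAC : b ∈ A' \ C := by
                        rcases Finset.mem_insert.mp hbG with h | h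
                        · exact absurd h hbne
                        · exact h
                      have hb1 := Finset.mem_sdiff.mp hbAC
                      exact hb1.2 (closure hzC ⟨hzA', hb1.1, hr hstep.2.2⟩)
                    exact Or.inr (hbah ▸ pb)
                  · have hzG : z' ∈ Good :=
                      Finset.mem_insert.mpr (Or.inr (Finset.mem_sdiff.mpr ⟨hzA', hzC⟩))
                    exact Or.inl ⟨hzG, pb.tail ⟨hbG, hzG, hstep.2.2⟩⟩
              · exact Or.inr hdone
          have : ReflTransGen (Stp r Good) w ah := by
            rcases claim3 ah (hconn w hwA ah hah) with ⟨_, p⟩ | p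
            · exact p
            · exact p
          exact ReflTransGen.mono (fun _ _ hs => stp_mono hGsub (fun _ _ hh => hh) hs) _ _ this

section Hyper

variable {V : Type} [DecidableEq V]

def rD : Finset V → Finset V → Prop := fun a b => (a ∩ b).Nonempty

def rV (E : Finset (Finset V)) : V → V → Prop := fun u v => ∃ f ∈ E, u ∈ f ∧ v ∈ f

def supp (E : Finset (Finset V)) : Finset V := E.biUnion id

lemma rD_symm : Symmetric (rD (V := V)) := by
  intro a b ⟨x, hx⟩
  rw [Finset.mem_inter] at hx
  exact ⟨x, Finset.mem_inter.mpr ⟨hx.2, hx.1⟩⟩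

lemma rV_symm (E : Finset (Finset V)) : Symmetric (rV E) := by
  intro u v ⟨f, hf, h1, h2⟩
  exact ⟨f, hf, h2, h1⟩

lemma rV_mono {E E' : Finset (Finset V)} (h : E' ⊆ E) :
    ∀ u v, rV E' u v → rV E u v := by
  intro u v ⟨f, hf, hh⟩
  exact ⟨f, h hf, hh⟩

lemma mem_supp {E : Finset (Finset V)} {v : V} : v ∈ supp E ↔ ∃ f ∈ E, v ∈ f := by
  simp [supp]

lemma subset_supp {E : Finset (Finset V)} {f : Finset V} (hf : f ∈ E) : f ⊆ supp E :=
  fun v hv => mem_supp.mpr ⟨f, hf, hv⟩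

lemma supp_mono {E' E : Finset (Finset V)} (h : E' ⊆ E) : supp E' ⊆ supp E := by
  intro v hv
  obtain ⟨f, hf, hvf⟩ := mem_supp.mp hv
  exact mem_supp.mpr ⟨f, h hf, hvf⟩

/-- The separator lemma: a connected hypergraph has an edge `e` and a vertex `d ∈ e`
such that deleting `e \ {d}` keeps the support connected; moreover the deleted set can
be required not to contain any prescribed nonempty vertex set `S`. -/
theorem SL : ∀ (n : ℕ) (E : Finset (Finset V)), E.card ≤ n → E.Nonempty → Conn rD E →
    ∀ S : Finset V, S.Nonempty → S ⊆ supp E →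
    ∃ e ∈ E, ∃ d ∈ e, Conn (rV E) (supp E \ e.erase d) ∧ ¬ S ⊆ e.erase d := by
  intro n
  induction n with
  | zero =>
    intro E hcard hne
    exact absurd (Finset.card_pos.mpr hne) (by omega)
  | succ n IH =>
    intro E hcard hne hconn S hSne hSsupp
    classical
    by_cases h1 : E.card = 1
    · -- single edge
      obtain ⟨e, hE⟩ := Finset.card_eq_one.mp h1
      subst hE
      have hsupp : supp {e} = e := by simp [supp]
      obtain ⟨d, hdS⟩ := hSne
      have hde : d ∈ e := hsupp ▸ hSsupp hdS
      refine ⟨e, Finset.mem_singleton_self e, d, hde, ?_,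
        fun hsub => (Finset.mem_erase.mp (hsub hdS)).1 rfl⟩
      have hrem : supp {e} \ e.erase d = {d} := by
        rw [hsupp]
        ext w
        simp only [Finset.mem_sdiff, Finset.mem_erase, Finset.mem_singleton, not_and]
        constructor
        · rintro ⟨hwe, hw2⟩
          by_contra hwd
          exact (hw2 hwd) hwe
        · rintro rfl
          exact ⟨hde, fun h => absurd rfl h⟩
      rw [hrem]
      intro u hu v hv
      rw [Finset.mem_singleton] at hu hv
      subst hu; subst hv
      exact ReflTransGen.refl
    · have h2 : 2 ≤ E.card := by
        have := Finset.card_pos.mpr hne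
        omega
      obtain ⟨e₀, he₀E, _, hconnE', y, hyE', hrDy⟩ :=
        exists_removable rD_symm E.card E le_rfl h2 hconn hne.choose hne.choose_spec
      set E' := E.erase e₀ with hE'def
      have hE'sub : E' ⊆ E := Finset.erase_subset _ _
      have hE'ne : E'.Nonempty := ⟨y, hyE'⟩
      have hcardE' : E'.card ≤ n := by
        have hh : E'.card = E.card - 1 := by
          rw [hE'def]; exact Finset.card_erase_of_mem he₀E
        omega
      obtain ⟨u0, hu0⟩ := hrDy
      rw [Finset.mem_inter] at hu0
      have hu0e₀ : u0 ∈ e₀ := hu0.1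
      have hu0E' : u0 ∈ supp E' := subset_supp hyE' hu0.2
      have hsuppsplit : ∀ w ∈ supp E, w ∈ supp E' ∨ w ∈ e₀ := by
        intro w hw
        obtain ⟨f, hfE, hwf⟩ := mem_supp.mp hw
        by_cases hfe₀ : f = e₀
        · exact Or.inr (hfe₀ ▸ hwf)
        · exact Or.inl (mem_supp.mpr ⟨f, Finset.mem_erase.mpr ⟨hfe₀, hfE⟩, hwf⟩)
      have LIFT : ∀ f ∈ E', ∀ d' ∈ f, Conn (rV E') (supp E' \ f.erase d') →
          ∀ s, s ∈ e₀ → s ∈ supp E' → s ∉ f.erase d' →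
          Conn (rV E) (supp E \ f.erase d') := by
        intro f hfE' d' hd' hCV s hse₀ hsE' hsX
        apply conn_of_hub (rV_symm E) (s := s)
        intro w hw
        rw [Finset.mem_sdiff] at hw
        have hs_rem' : s ∈ supp E' \ f.erase d' := Finset.mem_sdiff.mpr ⟨hsE', hsX⟩
        have hsubrem : supp E' \ f.erase d' ⊆ supp E \ f.erase d' := by
          intro q hq
          rw [Finset.mem_sdiff] at hq ⊢
          exact ⟨supp_mono hE'sub hq.1, hq.2⟩
        by_cases hwE' : w ∈ supp E'
        · exact rtg_mono hsubrem (rV_mono hE'sub)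
            (hCV w (Finset.mem_sdiff.mpr ⟨hwE', hw.2⟩) s hs_rem')
        · have hwe₀ : w ∈ e₀ := (hsuppsplit w hw.1).resolve_left hwE'
          exact ReflTransGen.single ⟨Finset.mem_sdiff.mpr hw, hsubrem hs_rem',
            ⟨e₀, he₀E, hwe₀, hse₀⟩⟩
      by_cases hS : S ⊆ supp E'
      · obtain ⟨f, hfE', d', hd', hCV, hSf⟩ := IH E' hcardE' hE'ne hconnE' S hSne hS
        by_cases hS₀ : e₀ ∩ supp E' ⊆ f.erase d'
        · -- the tricky case : the old separator contains the full boundary of e₀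
          have hd'e₀ : d' ∉ e₀ := by
            intro hd'e₀
            have : d' ∈ f.erase d' :=
              hS₀ (Finset.mem_inter.mpr ⟨hd'e₀, subset_supp hfE' hd'⟩)
            exact (Finset.mem_erase.mp this).1 rfl
          obtain ⟨d, hdS₀, hdgood⟩ :
              ∃ d, d ∈ e₀ ∩ supp E' ∧ ((S ∩ (e₀ ∩ supp E')).Nonempty → d ∈ S) := by
            by_cases hSS : (S ∩ (e₀ ∩ supp E')).Nonempty
            · obtain ⟨d, hd⟩ := hSS
              rw [Finset.mem_inter] at hd
              exact ⟨d, hd.2, fun _ => hd.1⟩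
            · exact ⟨u0, Finset.mem_inter.mpr ⟨hu0e₀, hu0E'⟩, fun h => absurd h hSS⟩
          rw [Finset.mem_inter] at hdS₀
          have hdf : d ∈ f.erase d' := hS₀ (Finset.mem_inter.mpr hdS₀)
          refine ⟨e₀, he₀E, d, hdS₀.1, ?_, ?_⟩
          · -- connectivity
            apply conn_of_hub (rV_symm E) (s := d')
            have hd'rem : d' ∈ supp E \ e₀.erase d := by
              rw [Finset.mem_sdiff]
              exact ⟨supp_mono hE'sub (subset_supp hfE' hd'),
                fun h => hd'e₀ (Finset.mem_of_mem_erase h)⟩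
            intro w hw
            rw [Finset.mem_sdiff] at hw
            by_cases hwrem' : w ∈ supp E' \ f.erase d'
            · have hd'rem' : d' ∈ supp E' \ f.erase d' := by
                rw [Finset.mem_sdiff]
                exact ⟨subset_supp hfE' hd', fun h => (Finset.mem_erase.mp h).1 rfl⟩
              have hsubrem : supp E' \ f.erase d' ⊆ supp E \ e₀.erase d := by
                intro q hq
                rw [Finset.mem_sdiff] at hq ⊢
                refine ⟨supp_mono hE'sub hq.1, fun hqe => ?_⟩
                have hqe₀ : q ∈ e₀ := Finset.mem_of_mem_erase hqe
                exact hq.2 (hS₀ (Finset.mem_inter.mpr ⟨hqe₀, hq.1⟩))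
              exact rtg_mono hsubrem (rV_mono hE'sub) (hCV w hwrem' d' hd'rem')
            · -- w must lie in f
              have hwf : w ∈ f := by
                rcases hsuppsplit w hw.1 with hwE' | hwe₀
                · have : w ∈ f.erase d' := by
                    by_contra hnot
                    exact hwrem' (Finset.mem_sdiff.mpr ⟨hwE', hnot⟩)
                  exact Finset.mem_of_mem_erase this
                · have hwd : w = d := by
                    by_contra hwd
                    exact hw.2 (Finset.mem_erase.mpr ⟨hwd, hwe₀⟩)
                  subst hwd
                  exact Finset.mem_of_mem_erase hdf
              exact ReflTransGen.single ⟨Finset.mem_sdiff.mpr hw, hd'rem,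
                ⟨f, hE'sub hfE', hwf, hd'⟩⟩
          · -- S is not contained in the deleted set
            by_cases hSS : (S ∩ (e₀ ∩ supp E')).Nonempty
            · intro hsub
              exact (Finset.mem_erase.mp (hsub (hdgood hSS))).1 rfl
            · obtain ⟨s, hsS⟩ := hSne
              intro hsub
              have hse := hsub hsS
              rw [Finset.mem_erase] at hse
              exact hSS ⟨s, Finset.mem_inter.mpr ⟨hsS,
                Finset.mem_inter.mpr ⟨hse.2, hS hsS⟩⟩⟩
        · obtain ⟨s, hsmem, hsX⟩ := Finset.not_subset.mp hS₀
          rw [Finset.mem_inter] at hsmem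
          exact ⟨f, hE'sub hfE', d', hd',
            LIFT f hfE' d' hd' hCV s hsmem.1 hsmem.2 hsX, hSf⟩
      · -- some element of S is outside supp E'
        obtain ⟨sp, hspS, hspE'⟩ := Finset.not_subset.mp hS
        have hS₀ne : (e₀ ∩ supp E').Nonempty := ⟨u0, Finset.mem_inter.mpr ⟨hu0e₀, hu0E'⟩⟩
        obtain ⟨f, hfE', d', hd', hCV, hS₀f⟩ :=
          IH E' hcardE' hE'ne hconnE' (e₀ ∩ supp E') hS₀ne Finset.inter_subset_right
        obtain ⟨s, hsmem, hsX⟩ := Finset.not_subset.mp hS₀f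
        rw [Finset.mem_inter] at hsmem
        refine ⟨f, hE'sub hfE', d', hd',
          LIFT f hfE' d' hd' hCV s hsmem.1 hsmem.2 hsX, ?_⟩
        intro hsub
        exact hspE' (subset_supp hfE' (Finset.mem_of_mem_erase (hsub hspS)))

end Hyper

section Coloring

variable {V : Type} [DecidableEq V]

/-- An edge is conflict-free under a coloring. -/
def CFe {α : Type} (f : Finset V) (c : V → α) : Prop :=
  ∃ v ∈ f, ∀ w ∈ f, c w = c v → w = v

lemma CFe_congr {α : Type} {f : Finset V} {c c' : V → α}
    (h : ∀ w ∈ f, c w = c' w) (hc : CFe f c') : CFe f c := by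
  obtain ⟨v, hv, hvu⟩ := hc
  refine ⟨v, hv, fun w hw hcw => hvu w hw ?_⟩
  rw [← h w hw, ← h v hv]
  exact hcw

/-- Key local fact: when one vertex of a 4-edge is recolored, at most one color choice
can break conflict-freeness of that edge. -/
lemma badsub {Δ : ℕ} {f : Finset V} (h4 : f.card = 4) {v : V} (hv : v ∈ f)
    (c : V → Fin Δ) {x y : Fin Δ}
    (hx : ¬ CFe f (Function.update c v x)) (hy : ¬ CFe f (Function.update c v y)) :
    x = y := by
  by_contra hxy
  have key : ∀ z : Fin Δ, ¬ CFe f (Function.update c v z) →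
      ∀ p ∈ f, ∃ q ∈ f, q ≠ p ∧ Function.update c v z q = Function.update c v z p := by
    intro z hz p hp
    by_contra hno
    push_neg at hno
    refine hz ⟨p, hp, fun w hw hcw => ?_⟩
    by_contra hne
    exact hno w hw hne hcw
  obtain ⟨w, hwf, hwv, hwe⟩ := key x hx v hv
  have hcw : c w = x := by
    rwa [Function.update_of_ne hwv, Function.update_self] at hwe
  obtain ⟨w', hw'f, hw'v, hw'e⟩ := key y hy v hv
  have hcw' : c w' = y := by
    rwa [Function.update_of_ne hw'v, Function.update_self] at hw'e
  have hww' : w ≠ w' := by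
    intro h
    exact hxy (by rw [← hcw, h, hcw'])
  obtain ⟨q, hqf, hqw', hqe⟩ := key x hx w' hw'f
  rw [Function.update_of_ne hw'v, hcw'] at hqe
  have hqv : q ≠ v := by
    intro h
    rw [h, Function.update_self] at hqe
    exact hxy hqe
  have hcq : c q = y := by rwa [Function.update_of_ne hqv] at hqe
  have hqw : q ≠ w := by
    intro h
    exact hxy (by rw [← hcw, ← h, hcq])
  -- f = {v, w, w', q}
  have hvw : v ≠ w := fun h => hwv h.symm
  have hvw' : v ≠ w' := fun h => hw'v h.symm
  have hvq : v ≠ q := fun h => hqv h.symm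
  have hsub : ({v, w, w', q} : Finset V) ⊆ f := by
    intro z hz
    simp only [Finset.mem_insert, Finset.mem_singleton] at hz
    rcases hz with rfl | rfl | rfl | rfl
    exacts [hv, hwf, hw'f, hqf]
  have hcard4 : ({v, w, w', q} : Finset V).card = 4 := by
    have hwq : w ≠ q := fun h => hqw h.symm
    have hw'q : w' ≠ q := fun h => hqw' h.symm
    rw [Finset.card_insert_of_notMem (by simp [hvw, hvw', hvq]),
      Finset.card_insert_of_notMem (by simp [hww', hwq]),
      Finset.card_insert_of_notMem (by simp [hw'q]),
      Finset.card_singleton]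
  have hfeq : f = {v, w, w', q} :=
    (Finset.eq_of_subset_of_card_le hsub (by rw [h4, hcard4])).symm
  apply hy
  refine ⟨w, hwf, ?_⟩
  intro p hpf hpe
  rw [Function.update_of_ne hwv, hcw] at hpe
  rw [hfeq] at hpf
  simp only [Finset.mem_insert, Finset.mem_singleton] at hpf
  rcases hpf with rfl | rfl | rfl | rfl
  · rw [Function.update_self] at hpe
    exact absurd hpe (fun h => hxy h.symm)
  · rfl
  · rw [Function.update_of_ne hw'v, hcw'] at hpe
    exact absurd hpe (fun h => hxy h.symm)
  · rw [Function.update_of_ne hqv, hcq] at hpe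
    exact absurd hpe (fun h => hxy h.symm)

/-- A 4-edge whose 3 non-`d` vertices are rainbow is conflict-free whatever color `d` gets. -/
lemma rainbowCF {Δ : ℕ} {e : Finset V} (h4 : e.card = 4) {d : V} (hd : d ∈ e)
    (c : V → Fin Δ) (hinj : Set.InjOn c ↑(e.erase d)) (x : Fin Δ) :
    CFe e (Function.update c d x) := by
  have ht : (e.erase d).card = 3 := by rw [Finset.card_erase_of_mem hd, h4]
  obtain ⟨w, hwt, hwx⟩ : ∃ w ∈ e.erase d, c w ≠ x := by
    by_contra hno
    push_neg at hno
    obtain ⟨w1, hw1, w2, hw2, hne⟩ := Finset.one_lt_card.mp (by omega : 1 < (e.erase d).card)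
    exact hne (hinj (Finset.mem_coe.mpr hw1) (Finset.mem_coe.mpr hw2)
      (by rw [hno w1 hw1, hno w2 hw2]))
  have hwd : w ≠ d := Finset.ne_of_mem_erase hwt
  refine ⟨w, Finset.mem_of_mem_erase hwt, ?_⟩
  intro p hpe hpw
  rw [Function.update_of_ne hwd] at hpw
  by_cases hpd : p = d
  · subst hpd
    rw [Function.update_self] at hpw
    exact absurd hpw.symm hwx
  · rw [Function.update_of_ne hpd] at hpw
    exact hinj (Finset.mem_coe.mpr (Finset.mem_erase.mpr ⟨hpd, hpe⟩))
      (Finset.mem_coe.mpr hwt) hpw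

lemma pick_color {Δ : ℕ} (hΔ : 1 ≤ Δ) {Forb : Finset (Fin Δ)} (h : Forb.card ≤ Δ - 1) :
    ∃ x, x ∉ Forb := by
  by_contra hno
  push_neg at hno
  have hsub : (Finset.univ : Finset (Fin Δ)) ⊆ Forb := fun x _ => hno x
  have := Finset.card_le_card hsub
  rw [Finset.card_univ, Fintype.card_fin] at this
  omega

/-- The greedy coloring lemma : peel removable vertices one at a time. -/
lemma greedy {Δ : ℕ} (hΔ : 3 ≤ Δ) (E : Finset (Finset V)) (h4 : ∀ f ∈ E, f.card = 4)
    (hdeg : ∀ v : V, hypDeg E v ≤ Δ) {e : Finset V} (he : e ∈ E) {d : V} (hd : d ∈ e) :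
    ∀ (n : ℕ) (A : Finset V), A.card ≤ n → A ⊆ supp E \ e.erase d → d ∈ A →
    Conn (rV E) A →
    ∀ c₀ : V → Fin Δ, Set.InjOn c₀ ↑(e.erase d) →
    (∀ f ∈ E, f ∩ A = ∅ → CFe f c₀) →
    ∃ c : V → Fin Δ, (∀ w, w ∉ A → c w = c₀ w) ∧ ∀ f ∈ E, CFe f c := by
  intro n
  induction n with
  | zero =>
    intro A hcard _ hdA
    have := Finset.card_pos.mpr ⟨d, hdA⟩
    omega
  | succ n IHn =>
    intro A hcard hsubA hdA hconn c₀ hinj hCF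
    classical
    by_cases hA1 : A = {d}
    · -- color the last vertex d
      have heF : e ∈ E.filter (fun f => d ∈ f) := Finset.mem_filter.mpr ⟨he, hd⟩
      set Bad : Finset V → Finset (Fin Δ) :=
        fun f => Finset.univ.filter (fun x => ¬ CFe f (Function.update c₀ d x)) with hBad
      set Forb := (E.filter (fun f => d ∈ f)).biUnion Bad with hForb
      have hForbsub : Forb ⊆ ((E.filter (fun f => d ∈ f)).erase e).biUnion Bad := by
        intro x hx
        obtain ⟨f, hfF, hxf⟩ := Finset.mem_biUnion.mp hx
        have hfe : f ≠ e := by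
          rintro rfl
          exact (Finset.mem_filter.mp hxf).2 (rainbowCF (h4 f (Finset.mem_filter.mp hfF).1)
            hd c₀ hinj x)
        exact Finset.mem_biUnion.mpr ⟨f, Finset.mem_erase.mpr ⟨hfe, hfF⟩, hxf⟩
      have hForbcard : Forb.card ≤ Δ - 1 := by
        have h1 : Forb.card ≤ ∑ f ∈ (E.filter (fun f => d ∈ f)).erase e, (Bad f).card :=
          le_trans (Finset.card_le_card hForbsub) (Finset.card_biUnion_le)
        have h2 : ∀ f ∈ (E.filter (fun f => d ∈ f)).erase e, (Bad f).card ≤ 1 := by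
          intro f hf
          have hfE := (Finset.mem_filter.mp (Finset.mem_of_mem_erase hf)).1
          have hdf := (Finset.mem_filter.mp (Finset.mem_of_mem_erase hf)).2
          apply Finset.card_le_one.mpr
          intro x hx y hy
          rw [hBad] at hx hy
          exact badsub (h4 f hfE) hdf c₀ (Finset.mem_filter.mp hx).2 (Finset.mem_filter.mp hy).2
        have h3 : ∑ f ∈ (E.filter (fun f => d ∈ f)).erase e, (Bad f).card ≤
            ((E.filter (fun f => d ∈ f)).erase e).card := by
          calc ∑ f ∈ (E.filter (fun f => d ∈ f)).erase e, (Bad f).card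
              ≤ ∑ _f ∈ (E.filter (fun f => d ∈ f)).erase e, 1 := Finset.sum_le_sum h2
            _ = ((E.filter (fun f => d ∈ f)).erase e).card := by simp
        have h5 : ((E.filter (fun f => d ∈ f)).erase e).card =
            (E.filter (fun f => d ∈ f)).card - 1 := Finset.card_erase_of_mem heF
        have h6 : (E.filter (fun f => d ∈ f)).card ≤ Δ := hdeg d
        omega
      obtain ⟨x, hx⟩ := pick_color (by omega) hForbcard
      refine ⟨Function.update c₀ d x, ?_, ?_⟩
      · intro w hw
        have hwd : w ≠ d := by
          intro h
          rw [hA1] at hw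
          exact hw (h ▸ Finset.mem_singleton_self d)
        exact Function.update_of_ne hwd _ _
      · intro f hf
        by_cases hdf : d ∈ f
        · by_cases hfe : f = e
          · subst hfe
            exact rainbowCF (h4 f hf) hd c₀ hinj x
          · by_contra hnc
            exact hx (Finset.mem_biUnion.mpr ⟨f, Finset.mem_filter.mpr ⟨hf, hdf⟩,
              by rw [hBad]; exact Finset.mem_filter.mpr ⟨Finset.mem_univ x, hnc⟩⟩)
        · have hfA : f ∩ A = ∅ := by
            rw [hA1]
            rw [Finset.eq_empty_iff_forall_notMem]
            intro z hz
            rw [Finset.mem_inter, Finset.mem_singleton] at hz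
            exact hdf (hz.2 ▸ hz.1)
          refine CFe_congr (fun w hw => Function.update_of_ne
            (fun (h : w = d) => hdf (h ▸ hw)) _ _) (hCF f hf hfA)
    · -- peel a removable vertex v ≠ d
      have hA2 : 2 ≤ A.card := by
        by_contra hlt
        push_neg at hlt
        interval_cases hA : A.card
        · exact absurd (Finset.card_eq_zero.mp hA ▸ hdA) (Finset.notMem_empty d)
        · obtain ⟨z, hz⟩ := Finset.card_eq_one.mp hA
          rw [hz] at hdA
          rw [Finset.mem_singleton] at hdA
          exact hA1 (by rw [hz, hdA])
      obtain ⟨v, hvA, hvd, hconn', u, hu, hruv⟩ :=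
        exists_removable (rV_symm E) A.card A le_rfl hA2 hconn d hdA
      obtain ⟨fu, hfuE, hvfu, hufu⟩ := hruv
      set Bad : Finset V → Finset (Fin Δ) :=
        fun f => Finset.univ.filter (fun x => ¬ CFe f (Function.update c₀ v x)) with hBad
      set F := E.filter (fun f => v ∈ f ∧ f ∩ A.erase v = ∅) with hF
      have hfuF : fu ∉ F := by
        intro hmem
        have h0 := (Finset.mem_filter.mp hmem).2.2
        have : u ∈ fu ∩ A.erase v := Finset.mem_inter.mpr ⟨hufu, hu⟩
        rw [h0] at this
        exact Finset.notMem_empty u this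
      have hfumem : fu ∈ E.filter (fun f => v ∈ f) := Finset.mem_filter.mpr ⟨hfuE, hvfu⟩
      have hFsub : F ⊆ (E.filter (fun f => v ∈ f)).erase fu := by
        intro f hf
        refine Finset.mem_erase.mpr ⟨fun h => hfuF (h ▸ hf), ?_⟩
        have := Finset.mem_filter.mp hf
        exact Finset.mem_filter.mpr ⟨this.1, this.2.1⟩
      have hFcard : F.card ≤ Δ - 1 := by
        have h1 := Finset.card_le_card hFsub
        have h2 : ((E.filter (fun f => v ∈ f)).erase fu).card =
            (E.filter (fun f => v ∈ f)).card - 1 := Finset.card_erase_of_mem hfumem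
        have h3 : (E.filter (fun f => v ∈ f)).card ≤ Δ := hdeg v
        omega
      set Forb := F.biUnion Bad with hForb
      have hForbcard : Forb.card ≤ Δ - 1 := by
        have h1 : Forb.card ≤ ∑ f ∈ F, (Bad f).card := Finset.card_biUnion_le
        have h2 : ∀ f ∈ F, (Bad f).card ≤ 1 := by
          intro f hf
          have hfE := (Finset.mem_filter.mp hf).1
          have hvf := (Finset.mem_filter.mp hf).2.1
          apply Finset.card_le_one.mpr
          intro x hx y hy
          rw [hBad] at hx hy
          exact badsub (h4 f hfE) hvf c₀ (Finset.mem_filter.mp hx).2 (Finset.mem_filter.mp hy).2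
        have h3 : ∑ f ∈ F, (Bad f).card ≤ F.card := by
          calc ∑ f ∈ F, (Bad f).card ≤ ∑ _f ∈ F, 1 := Finset.sum_le_sum h2
            _ = F.card := by simp
        omega
      obtain ⟨x, hx⟩ := pick_color (by omega) hForbcard
      set c₁ := Function.update c₀ v x with hc₁
      have hvrem : v ∈ supp E \ e.erase d := hsubA hvA
      have hved : v ∉ e.erase d := (Finset.mem_sdiff.mp hvrem).2
      have hinj1 : Set.InjOn c₁ ↑(e.erase d) := by
        intro p hp q hq hpq
        rw [Finset.mem_coe] at hp hq
        have hpv : p ≠ v := fun h => hved (h ▸ hp)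
        have hqv : q ≠ v := fun h => hved (h ▸ hq)
        rw [hc₁, Function.update_of_ne hpv, Function.update_of_ne hqv] at hpq
        exact hinj (Finset.mem_coe.mpr hp) (Finset.mem_coe.mpr hq) hpq
      have hCF1 : ∀ f ∈ E, f ∩ (A.erase v) = ∅ → CFe f c₁ := by
        intro f hf hfa
        by_cases hvf : v ∈ f
        · have hfF : f ∈ F := Finset.mem_filter.mpr ⟨hf, hvf, hfa⟩
          by_contra hnc
          exact hx (Finset.mem_biUnion.mpr ⟨f, hfF,
            by rw [hBad]; exact Finset.mem_filter.mpr ⟨Finset.mem_univ x, hnc⟩⟩)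
        · have hfA : f ∩ A = ∅ := by
            rw [Finset.eq_empty_iff_forall_notMem]
            intro z hz
            rw [Finset.mem_inter] at hz
            have hzv : z ≠ v := fun h => hvf (h ▸ hz.1)
            have : z ∈ f ∩ A.erase v :=
              Finset.mem_inter.mpr ⟨hz.1, Finset.mem_erase.mpr ⟨hzv, hz.2⟩⟩
            rw [hfa] at this
            exact Finset.notMem_empty z this
          refine CFe_congr (fun w hw => Function.update_of_ne
            (fun (h : w = v) => hvf (h ▸ hw)) _ _) (hCF f hf hfA)
      have hcard' : (A.erase v).card ≤ n := by
        have := Finset.card_erase_of_mem hvA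
        omega
      obtain ⟨c, hcext, hcCF⟩ := IHn (A.erase v) hcard'
        ((Finset.erase_subset v A).trans hsubA)
        (Finset.mem_erase.mpr ⟨Ne.symm hvd, hdA⟩) hconn' c₁ hinj1 hCF1
      refine ⟨c, ?_, hcCF⟩
      intro w hw
      have hwv : w ≠ v := fun h => hw (h ▸ hvA)
      have h1 : c w = c₁ w := hcext w (fun hmem => hw (Finset.mem_of_mem_erase hmem))
      rw [h1, hc₁]
      exact Function.update_of_ne hwv _ _

end Coloring

section Assemble

variable {V : Type} [DecidableEq V]

/-- A connected 4-uniform hypergraph with degrees at most `Δ ≥ 3` is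
conflict-free colorable with `Δ` colors. -/
lemma conn_colorable {Δ : ℕ} (hΔ : 3 ≤ Δ) (E : Finset (Finset V))
    (h4 : ∀ f ∈ E, f.card = 4) (hdeg : ∀ v : V, hypDeg E v ≤ Δ)
    (hne : E.Nonempty) (hconn : Conn rD E) :
    ∃ c : V → Fin Δ, ∀ f ∈ E, CFe f c := by
  classical
  obtain ⟨e₁, he₁⟩ := hne
  have he₁ne : e₁.Nonempty := Finset.card_pos.mp (by rw [h4 e₁ he₁]; omega)
  obtain ⟨v₁, hv₁⟩ := he₁ne
  obtain ⟨e, he, d, hd, hconnrem, -⟩ := SL E.card E le_rfl ⟨e₁, he₁⟩ hconn {v₁}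
    (Finset.singleton_nonempty v₁)
    (by
      intro z hz
      rw [Finset.mem_singleton] at hz
      subst hz
      exact subset_supp he₁ hv₁)
  have h3 : (e.erase d).card = 3 := by rw [Finset.card_erase_of_mem hd, h4 e he]
  obtain ⟨a, b, c3, hab, hac, hbc, hteq⟩ := Finset.card_eq_three.mp h3
  set c₀ : V → Fin Δ := fun w =>
    if w = a then ⟨0, by omega⟩ else if w = b then ⟨1, by omega⟩ else ⟨2, by omega⟩ with hc₀
  have hba : ¬ b = a := fun h => hab h.symm
  have hca : ¬ c3 = a := fun h => hac h.symm
  have hcb : ¬ c3 = b := fun h => hbc h.symm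
  have hval : c₀ a = ⟨0, by omega⟩ ∧ c₀ b = ⟨1, by omega⟩ ∧ c₀ c3 = ⟨2, by omega⟩ := by
    refine ⟨by simp [hc₀], by simp [hc₀, hba], by simp [hc₀, hca, hcb]⟩
  have hinj : Set.InjOn c₀ ↑(e.erase d) := by
    intro p hp q hq hpq
    rw [Finset.mem_coe, hteq] at hp hq
    simp only [Finset.mem_insert, Finset.mem_singleton] at hp hq
    rcases hp with rfl | rfl | rfl <;> rcases hq with rfl | rfl | rfl <;>
      first
        | rfl
        | (rw [hval.1, hval.2.1] at hpq; exact absurd (Fin.mk.injEq .. ▸ hpq) (by omega))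
        | (rw [hval.1, hval.2.2] at hpq; exact absurd (Fin.mk.injEq .. ▸ hpq) (by omega))
        | (rw [hval.2.1, hval.1] at hpq; exact absurd (Fin.mk.injEq .. ▸ hpq) (by omega))
        | (rw [hval.2.1, hval.2.2] at hpq; exact absurd (Fin.mk.injEq .. ▸ hpq) (by omega))
        | (rw [hval.2.2, hval.1] at hpq; exact absurd (Fin.mk.injEq .. ▸ hpq) (by omega))
        | (rw [hval.2.2, hval.2.1] at hpq; exact absurd (Fin.mk.injEq .. ▸ hpq) (by omega))
  have hdrem : d ∈ supp E \ e.erase d := Finset.mem_sdiff.mpr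
    ⟨subset_supp he hd, fun h => (Finset.mem_erase.mp h).1 rfl⟩
  have hCF0 : ∀ f ∈ E, f ∩ (supp E \ e.erase d) = ∅ → CFe f c₀ := by
    intro f hf hempty
    exfalso
    have hfsub : f ⊆ e.erase d := by
      intro w hw
      have hwsupp : w ∈ supp E := subset_supp hf hw
      by_contra hwe
      have : w ∈ f ∩ (supp E \ e.erase d) :=
        Finset.mem_inter.mpr ⟨hw, Finset.mem_sdiff.mpr ⟨hwsupp, hwe⟩⟩
      rw [hempty] at this
      exact Finset.notMem_empty w this
    have := Finset.card_le_card hfsub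
    rw [h4 f hf, h3] at this
    omega
  obtain ⟨c, -, hc⟩ := greedy hΔ E h4 hdeg he hd (supp E \ e.erase d).card
    (supp E \ e.erase d) le_rfl Finset.Subset.rfl hdrem hconnrem c₀ hinj hCF0
  exact ⟨c, hc⟩

/-- Main result, by strong induction on the number of edges (splitting components). -/
lemma main {Δ : ℕ} (hΔ : 3 ≤ Δ) : ∀ (n : ℕ) (E : Finset (Finset V)), E.card ≤ n →
    (∀ f ∈ E, f.card = 4) → (∀ v : V, hypDeg E v ≤ Δ) →
    ∃ c : V → Fin Δ, ∀ f ∈ E, CFe f c := by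
  intro n
  induction n with
  | zero =>
    intro E hE _ _
    have hE0 : E = ∅ := Finset.card_eq_zero.mp (Nat.le_antisymm hE (Nat.zero_le _))
    subst hE0
    exact ⟨fun _ => ⟨0, by omega⟩, by simp⟩
  | succ n IHn =>
    intro E hcard h4 hdeg
    classical
    rcases Finset.eq_empty_or_nonempty E with rfl | hne
    · exact ⟨fun _ => ⟨0, by omega⟩, by simp⟩
    obtain ⟨e₀, he₀⟩ := hne
    set E₁ := E.filter (fun f => ReflTransGen (Stp rD E) e₀ f) with hE₁
    have he₀E₁ : e₀ ∈ E₁ := Finset.mem_filter.mpr ⟨he₀, ReflTransGen.refl⟩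
    have hE₁sub : E₁ ⊆ E := Finset.filter_subset _ _
    by_cases hall : E₁ = E
    · have hconn : Conn rD E := by
        have hreach : ∀ f ∈ E, ReflTransGen (Stp rD E) f e₀ := by
          intro f hf
          have : f ∈ E₁ := hall ▸ hf
          exact (@Std.Symm.symm _ _ (@ReflTransGen.stdSymm _ _ ⟨fun _ _ h' => (stp_symm rD_symm E) h'⟩) _ _) (Finset.mem_filter.mp this).2
        intro u hu v hv
        exact (hreach u hu).trans
          ((@Std.Symm.symm _ _ (@ReflTransGen.stdSymm _ _ ⟨fun _ _ h' => (stp_symm rD_symm E) h'⟩) _ _) (hreach v hv))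
      exact conn_colorable hΔ E h4 hdeg ⟨e₀, he₀⟩ hconn
    · set E₂ := E \ E₁ with hE₂
      have hE₂sub : E₂ ⊆ E := Finset.sdiff_subset
      have hE₂ne : E₂.Nonempty := by
        obtain ⟨g, hgE, hgE₁⟩ := Finset.exists_of_ssubset ⟨hE₁sub, fun h => hall
          (Finset.Subset.antisymm hE₁sub h)⟩
        exact ⟨g, Finset.mem_sdiff.mpr ⟨hgE, hgE₁⟩⟩
      have hcard₁ : E₁.card ≤ n := by
        have : E₁.card < E.card := Finset.card_lt_card ⟨hE₁sub, fun h => hall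
          (Finset.Subset.antisymm hE₁sub h)⟩
        omega
      have hcard₂ : E₂.card ≤ n := by
        have he₀E₂ : e₀ ∉ E₂ := fun h => (Finset.mem_sdiff.mp h).2 he₀E₁
        have hsub : E₂ ⊆ E.erase e₀ := fun g hg =>
          Finset.mem_erase.mpr ⟨fun hh => he₀E₂ (hh ▸ hg), hE₂sub hg⟩
        have h1 := Finset.card_le_card hsub
        have h2 := Finset.card_erase_of_mem he₀
        have h3 := Finset.card_pos.mpr ⟨e₀, he₀⟩
        omega
      have hdeg₁ : ∀ v : V, hypDeg E₁ v ≤ Δ := fun v =>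
        le_trans (Finset.card_le_card (Finset.filter_subset_filter _ hE₁sub)) (hdeg v)
      have hdeg₂ : ∀ v : V, hypDeg E₂ v ≤ Δ := fun v =>
        le_trans (Finset.card_le_card (Finset.filter_subset_filter _ hE₂sub)) (hdeg v)
      obtain ⟨c₁, hc₁⟩ := IHn E₁ hcard₁ (fun f hf => h4 f (hE₁sub hf)) hdeg₁
      obtain ⟨c₂, hc₂⟩ := IHn E₂ hcard₂ (fun f hf => h4 f (hE₂sub hf)) hdeg₂
      refine ⟨fun w => if w ∈ supp E₁ then c₁ w else c₂ w, ?_⟩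
      intro f hf
      by_cases hf₁ : f ∈ E₁
      · refine CFe_congr (fun w hw => ?_) (hc₁ f hf₁)
        have : w ∈ supp E₁ := mem_supp.mpr ⟨f, hf₁, hw⟩
        simp [this]
      · have hf₂ : f ∈ E₂ := Finset.mem_sdiff.mpr ⟨hf, hf₁⟩
        refine CFe_congr (fun w hw => ?_) (hc₂ f hf₂)
        have hns : w ∉ supp E₁ := by
          intro hwsupp
          obtain ⟨g, hgE₁, hwg⟩ := mem_supp.mp hwsupp
          have hreach : ReflTransGen (Stp rD E) e₀ g := (Finset.mem_filter.mp hgE₁).2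
          have hstep : Stp rD E g f :=
            ⟨hE₁sub hgE₁, hf, ⟨w, Finset.mem_inter.mpr ⟨hwg, hw⟩⟩⟩
          exact hf₁ (Finset.mem_filter.mpr ⟨hf, hreach.tail hstep⟩)
        simp [hns]

end Assemble

end CFP

/-- Every 4-uniform hypergraph of maximum degree at most 3 has a conflict-free
coloring with 3 colors; consequently, every 4-uniform hypergraph of maximum
degree at most `Δ`, `Δ ≥ 3`, has a conflict-free coloring with `Δ` colors. -/
theorem four_uniform_chiCF_le_maxDeg :
    (∀ (V : Type) [Fintype V] [DecidableEq V] (E : Finset (Finset V)),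
      (∀ e ∈ E, e.card = 4) → (∀ v : V, hypDeg E v ≤ 3) →
      ∃ c : V → Fin 3, ConflictFree E c) ∧
    (∀ (Δ : ℕ), 3 ≤ Δ →
      ∀ (V : Type) [Fintype V] [DecidableEq V] (E : Finset (Finset V)),
        (∀ e ∈ E, e.card = 4) → (∀ v : V, hypDeg E v ≤ Δ) →
        ∃ c : V → Fin Δ, ConflictFree E c) := by
  constructor
  · intro V _ _ E h4 hdeg
    obtain ⟨c, hc⟩ := CFP.main (le_refl 3) E.card E le_rfl h4 hdeg
    exact ⟨c, hc⟩
  · intro Δ hΔ V _ _ E h4 hdeg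
    obtain ⟨c, hc⟩ := CFP.main hΔ E.card E le_rfl h4 hdeg
    exact ⟨c, hc⟩
end

section
/- For every even r ≥ 2 there exists a 3-regular hypergraph H whose edges all have size at most r (one edge of size r, the rest of size 2) with χ_cf(H) > 3. -/
namespace CFProof

def pedge (k x y : ℕ) : Finset (Fin (4*k)) :=
  Finset.univ.filter (fun v => v.val = x ∨ v.val = y)

def bigB (k : ℕ) : Finset (Fin (4*k)) :=
  Finset.univ.filter (fun v => v.val % 4 < 2)

def Q (k : ℕ) (e : Finset (Fin (4*k))) : Prop :=
  e = bigB k ∨ ∃ i < k,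
    e = pedge k (4*i) (4*i+2) ∨ e = pedge k (4*i) (4*i+3) ∨
    e = pedge k (4*i+1) (4*i+2) ∨ e = pedge k (4*i+1) (4*i+3) ∨
    e = pedge k (4*i+2) (4*i+3)

instance {k : ℕ} : DecidablePred (Q k) := fun e => by
  unfold Q; infer_instance

def Ek (k : ℕ) : Finset (Finset (Fin (4*k))) := Finset.univ.filter (Q k)

variable {k : ℕ}

lemma mem_Ek {e : Finset (Fin (4*k))} : e ∈ Ek k ↔ Q k e := by simp [Ek]

lemma mem_pedge {x y : ℕ} {v : Fin (4*k)} :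
    v ∈ pedge k x y ↔ v.val = x ∨ v.val = y := by simp [pedge]

lemma mem_bigB {v : Fin (4*k)} : v ∈ bigB k ↔ v.val % 4 < 2 := by simp [bigB]

lemma card_pedge {x y : ℕ} (hx : x < 4*k) (hy : y < 4*k) (hxy : x ≠ y) :
    (pedge k x y).card = 2 := by
  have h : pedge k x y = {⟨x, hx⟩, ⟨y, hy⟩} := by
    ext v; simp [mem_pedge, Fin.ext_iff]
  rw [h, Finset.card_insert_of_notMem, Finset.card_singleton]
  simp [Fin.ext_iff, hxy]

lemma pedge_ne_left {x y x' y' : ℕ} (hx : x < 4*k) (h1 : x ≠ x') (h2 : x ≠ y') :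
    pedge k x y ≠ pedge k x' y' := by
  intro h
  have hm : (⟨x, hx⟩ : Fin (4*k)) ∈ pedge k x y := mem_pedge.mpr (Or.inl rfl)
  rw [h] at hm
  rcases mem_pedge.mp hm with h' | h' <;> simp_all

lemma pedge_ne_right {x y x' y' : ℕ} (hy : y < 4*k) (h1 : y ≠ x') (h2 : y ≠ y') :
    pedge k x y ≠ pedge k x' y' := by
  intro h
  have hm : (⟨y, hy⟩ : Fin (4*k)) ∈ pedge k x y := mem_pedge.mpr (Or.inr rfl)
  rw [h] at hm
  rcases mem_pedge.mp hm with h' | h' <;> simp_all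

lemma pedge_ne_bigB {x y : ℕ} (hy : y < 4*k) (h : 2 ≤ y % 4) :
    pedge k x y ≠ bigB k := by
  intro hh
  have hm : (⟨y, hy⟩ : Fin (4*k)) ∈ pedge k x y := mem_pedge.mpr (Or.inr rfl)
  rw [hh] at hm
  have h2 : y % 4 < 2 := mem_bigB.mp hm
  omega

lemma card_bigB : (bigB k).card = 2*k := by
  have h : bigB k = Finset.image
      (fun j : Fin (2*k) => (⟨4*(j.val/2) + j.val%2, by omega⟩ : Fin (4*k)))
      Finset.univ := by
    ext v
    simp only [mem_bigB, Finset.mem_image, Finset.mem_univ, true_and]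
    constructor
    · intro hv
      refine ⟨⟨2*(v.val/4) + v.val%4, by omega⟩, ?_⟩
      apply Fin.ext
      simp only []
      omega
    · rintro ⟨j, rfl⟩
      simp only []
      omega
  rw [h, Finset.card_image_of_injective _ ?_, Finset.card_univ, Fintype.card_fin]
  intro a b hab
  have h2 := Fin.ext_iff.mp hab
  simp only [] at h2
  apply Fin.ext
  omega

lemma deg (v : Fin (4*k)) : hypDeg (Ek k) v = 3 := by
  have hv := v.isLt
  have hq : v.val / 4 < k := by omega
  set q := v.val / 4 with hqdef
  unfold hypDeg
  have h4 : v.val % 4 = 0 ∨ v.val % 4 = 1 ∨ v.val % 4 = 2 ∨ v.val % 4 = 3 := by omega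
  rcases h4 with h | h | h | h
  · have hfe : (Ek k).filter (fun e => v ∈ e)
        = {pedge k (4*q) (4*q+2), pedge k (4*q) (4*q+3), bigB k} := by
      ext e
      simp only [Finset.mem_filter, mem_Ek, Q, Finset.mem_insert, Finset.mem_singleton]
      constructor
      · rintro ⟨rfl | ⟨i, hi, rfl | rfl | rfl | rfl | rfl⟩, hv'⟩
        · tauto
        · obtain rfl : i = q := by rcases mem_pedge.mp hv' with h'|h' <;> omega
          tauto
        · obtain rfl : i = q := by rcases mem_pedge.mp hv' with h'|h' <;> omega
          tauto
        · exfalso; rcases mem_pedge.mp hv' with h'|h' <;> omega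
        · exfalso; rcases mem_pedge.mp hv' with h'|h' <;> omega
        · exfalso; rcases mem_pedge.mp hv' with h'|h' <;> omega
      · rintro (rfl | rfl | rfl)
        · exact ⟨Or.inr ⟨q, hq, by tauto⟩, mem_pedge.mpr (by omega)⟩
        · exact ⟨Or.inr ⟨q, hq, by tauto⟩, mem_pedge.mpr (by omega)⟩
        · exact ⟨Or.inl rfl, mem_bigB.mpr (by omega)⟩
    rw [hfe, Finset.card_insert_of_notMem, Finset.card_insert_of_notMem,
      Finset.card_singleton]
    · exact Finset.notMem_singleton.mpr (pedge_ne_bigB (by omega) (by omega))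
    · simp only [Finset.mem_insert, Finset.mem_singleton]
      push_neg
      exact ⟨pedge_ne_right (y := 4*q+2) (by omega) (by omega) (by omega),
        pedge_ne_bigB (by omega) (by omega)⟩
  · have hfe : (Ek k).filter (fun e => v ∈ e)
        = {pedge k (4*q+1) (4*q+2), pedge k (4*q+1) (4*q+3), bigB k} := by
      ext e
      simp only [Finset.mem_filter, mem_Ek, Q, Finset.mem_insert, Finset.mem_singleton]
      constructor
      · rintro ⟨rfl | ⟨i, hi, rfl | rfl | rfl | rfl | rfl⟩, hv'⟩
        · tauto
        · exfalso; rcases mem_pedge.mp hv' with h'|h' <;> omega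
        · exfalso; rcases mem_pedge.mp hv' with h'|h' <;> omega
        · obtain rfl : i = q := by rcases mem_pedge.mp hv' with h'|h' <;> omega
          tauto
        · obtain rfl : i = q := by rcases mem_pedge.mp hv' with h'|h' <;> omega
          tauto
        · exfalso; rcases mem_pedge.mp hv' with h'|h' <;> omega
      · rintro (rfl | rfl | rfl)
        · exact ⟨Or.inr ⟨q, hq, by tauto⟩, mem_pedge.mpr (by omega)⟩
        · exact ⟨Or.inr ⟨q, hq, by tauto⟩, mem_pedge.mpr (by omega)⟩
        · exact ⟨Or.inl rfl, mem_bigB.mpr (by omega)⟩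
    rw [hfe, Finset.card_insert_of_notMem, Finset.card_insert_of_notMem,
      Finset.card_singleton]
    · exact Finset.notMem_singleton.mpr (pedge_ne_bigB (by omega) (by omega))
    · simp only [Finset.mem_insert, Finset.mem_singleton]
      push_neg
      exact ⟨pedge_ne_right (y := 4*q+2) (by omega) (by omega) (by omega),
        pedge_ne_bigB (by omega) (by omega)⟩
  · have hfe : (Ek k).filter (fun e => v ∈ e)
        = {pedge k (4*q) (4*q+2), pedge k (4*q+1) (4*q+2), pedge k (4*q+2) (4*q+3)} := by
      ext e
      simp only [Finset.mem_filter, mem_Ek, Q, Finset.mem_insert, Finset.mem_singleton]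
      constructor
      · rintro ⟨rfl | ⟨i, hi, rfl | rfl | rfl | rfl | rfl⟩, hv'⟩
        · exfalso; have := mem_bigB.mp hv'; omega
        · obtain rfl : i = q := by rcases mem_pedge.mp hv' with h'|h' <;> omega
          tauto
        · exfalso; rcases mem_pedge.mp hv' with h'|h' <;> omega
        · obtain rfl : i = q := by rcases mem_pedge.mp hv' with h'|h' <;> omega
          tauto
        · exfalso; rcases mem_pedge.mp hv' with h'|h' <;> omega
        · obtain rfl : i = q := by rcases mem_pedge.mp hv' with h'|h' <;> omega
          tauto
      · rintro (rfl | rfl | rfl)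
        · exact ⟨Or.inr ⟨q, hq, by tauto⟩, mem_pedge.mpr (by omega)⟩
        · exact ⟨Or.inr ⟨q, hq, by tauto⟩, mem_pedge.mpr (by omega)⟩
        · exact ⟨Or.inr ⟨q, hq, by tauto⟩, mem_pedge.mpr (by omega)⟩
    rw [hfe, Finset.card_insert_of_notMem, Finset.card_insert_of_notMem,
      Finset.card_singleton]
    · exact Finset.notMem_singleton.mpr
        (pedge_ne_left (x := 4*q+1) (by omega) (by omega) (by omega))
    · simp only [Finset.mem_insert, Finset.mem_singleton]
      push_neg
      exact ⟨pedge_ne_left (x := 4*q) (by omega) (by omega) (by omega),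
        pedge_ne_left (x := 4*q) (by omega) (by omega) (by omega)⟩
  · have hfe : (Ek k).filter (fun e => v ∈ e)
        = {pedge k (4*q) (4*q+3), pedge k (4*q+1) (4*q+3), pedge k (4*q+2) (4*q+3)} := by
      ext e
      simp only [Finset.mem_filter, mem_Ek, Q, Finset.mem_insert, Finset.mem_singleton]
      constructor
      · rintro ⟨rfl | ⟨i, hi, rfl | rfl | rfl | rfl | rfl⟩, hv'⟩
        · exfalso; have := mem_bigB.mp hv'; omega
        · exfalso; rcases mem_pedge.mp hv' with h'|h' <;> omega
        · obtain rfl : i = q := by rcases mem_pedge.mp hv' with h'|h' <;> omega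
          tauto
        · exfalso; rcases mem_pedge.mp hv' with h'|h' <;> omega
        · obtain rfl : i = q := by rcases mem_pedge.mp hv' with h'|h' <;> omega
          tauto
        · obtain rfl : i = q := by rcases mem_pedge.mp hv' with h'|h' <;> omega
          tauto
      · rintro (rfl | rfl | rfl)
        · exact ⟨Or.inr ⟨q, hq, by tauto⟩, mem_pedge.mpr (by omega)⟩
        · exact ⟨Or.inr ⟨q, hq, by tauto⟩, mem_pedge.mpr (by omega)⟩
        · exact ⟨Or.inr ⟨q, hq, by tauto⟩, mem_pedge.mpr (by omega)⟩
    rw [hfe, Finset.card_insert_of_notMem, Finset.card_insert_of_notMem,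
      Finset.card_singleton]
    · exact Finset.notMem_singleton.mpr
        (pedge_ne_left (x := 4*q+1) (by omega) (by omega) (by omega))
    · simp only [Finset.mem_insert, Finset.mem_singleton]
      push_neg
      exact ⟨pedge_ne_left (x := 4*q) (by omega) (by omega) (by omega),
        pedge_ne_left (x := 4*q) (by omega) (by omega) (by omega)⟩

lemma noCF (hk : 0 < k) : ¬ ∃ c : Fin (4*k) → Fin 3, ConflictFree (Ek k) c := by
  rintro ⟨c, hc⟩
  have pairP : ∀ (x y : ℕ) (hx : x < 4*k) (hy : y < 4*k), x ≠ y →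
      pedge k x y ∈ Ek k → c ⟨x, hx⟩ ≠ c ⟨y, hy⟩ := by
    intro x y hx hy hxy hmem hcc
    obtain ⟨v, hv, hu⟩ := hc _ hmem
    rcases mem_pedge.mp hv with h | h
    · obtain rfl : v = ⟨x, hx⟩ := Fin.ext h
      have := hu ⟨y, hy⟩ (mem_pedge.mpr (Or.inr rfl)) hcc.symm
      exact hxy (Fin.ext_iff.mp this).symm
    · obtain rfl : v = ⟨y, hy⟩ := Fin.ext h
      have := hu ⟨x, hx⟩ (mem_pedge.mpr (Or.inl rfl)) hcc
      exact hxy (Fin.ext_iff.mp this)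
  have partner : ∀ i, (hi : i < k) →
      c ⟨4*i, by omega⟩ = c ⟨4*i+1, by omega⟩ := by
    intro i hi
    have e1 : pedge k (4*i) (4*i+2) ∈ Ek k := mem_Ek.mpr (Or.inr ⟨i, hi, by tauto⟩)
    have e2 : pedge k (4*i) (4*i+3) ∈ Ek k := mem_Ek.mpr (Or.inr ⟨i, hi, by tauto⟩)
    have e3 : pedge k (4*i+1) (4*i+2) ∈ Ek k := mem_Ek.mpr (Or.inr ⟨i, hi, by tauto⟩)
    have e4 : pedge k (4*i+1) (4*i+3) ∈ Ek k := mem_Ek.mpr (Or.inr ⟨i, hi, by tauto⟩)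
    have e5 : pedge k (4*i+2) (4*i+3) ∈ Ek k := mem_Ek.mpr (Or.inr ⟨i, hi, by tauto⟩)
    have h1 := pairP (4*i) (4*i+2) (by omega) (by omega) (by omega) e1
    have h2 := pairP (4*i) (4*i+3) (by omega) (by omega) (by omega) e2
    have h3 := pairP (4*i+1) (4*i+2) (by omega) (by omega) (by omega) e3
    have h4 := pairP (4*i+1) (4*i+3) (by omega) (by omega) (by omega) e4
    have h5 := pairP (4*i+2) (4*i+3) (by omega) (by omega) (by omega) e5
    apply Fin.ext
    have b1 := (c ⟨4*i, by omega⟩).isLt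
    have b2 := (c ⟨4*i+1, by omega⟩).isLt
    have b3 := (c ⟨4*i+2, by omega⟩).isLt
    have b4 := (c ⟨4*i+3, by omega⟩).isLt
    rw [Fin.ne_iff_vne] at h1 h2 h3 h4 h5
    omega
  have hB : bigB k ∈ Ek k := mem_Ek.mpr (Or.inl rfl)
  obtain ⟨u, hu, huniq⟩ := hc _ hB
  have hum := mem_bigB.mp hu
  have hulr := u.isLt
  have hq : u.val / 4 < k := by omega
  rcases (by omega : u.val % 4 = 0 ∨ u.val % 4 = 1) with h | h
  · have hq0 : c u = c ⟨4*(u.val/4), by omega⟩ := by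
      congr 1; exact Fin.ext (show u.val = 4*(u.val/4) by omega)
    have hw : (⟨4*(u.val/4)+1, by omega⟩ : Fin (4*k)) ∈ bigB k :=
      mem_bigB.mpr (show (4*(u.val/4)+1) % 4 < 2 by omega)
    have hcw : c ⟨4*(u.val/4)+1, by omega⟩ = c u := by rw [hq0, partner _ hq]
    have h3 : 4*(u.val/4)+1 = u.val := Fin.ext_iff.mp (huniq _ hw hcw)
    omega
  · have hq0 : c u = c ⟨4*(u.val/4)+1, by omega⟩ := by
      congr 1; exact Fin.ext (show u.val = 4*(u.val/4)+1 by omega)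
    have hw : (⟨4*(u.val/4), by omega⟩ : Fin (4*k)) ∈ bigB k :=
      mem_bigB.mpr (show (4*(u.val/4)) % 4 < 2 by omega)
    have hcw : c ⟨4*(u.val/4), by omega⟩ = c u := by rw [hq0, partner _ hq]
    have h3 : 4*(u.val/4) = u.val := Fin.ext_iff.mp (huniq _ hw hcw)
    omega

end CFProof

/-- For every even `r ≥ 2` there is a 3-regular hypergraph whose edges all
have size 2 except one edge of size `r`, with no conflict-free 3-coloring
(so `χ_cf > 3`). -/
theorem exists_three_regular_chiCF_gt_three (r : ℕ) (hr : Even r) (hr2 : 2 ≤ r) :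
    ∃ (n : ℕ) (E : Finset (Finset (Fin n))),
      (∀ v : Fin n, hypDeg E v = 3) ∧
      (∀ e ∈ E, e.card = 2 ∨ e.card = r) ∧
      (∃ e ∈ E, e.card = r) ∧
      ¬ ∃ c : Fin n → Fin 3, ConflictFree E c := by
  obtain ⟨k, hk⟩ := hr
  have hk1 : 0 < k := by omega
  have hrk : r = 2*k := by omega
  refine ⟨4*k, CFProof.Ek k, fun v => CFProof.deg v, ?_, ?_, CFProof.noCF hk1⟩
  · intro e he
    rcases CFProof.mem_Ek.mp he with rfl | ⟨i, hi, rfl | rfl | rfl | rfl | rfl⟩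
    · right; rw [CFProof.card_bigB]; omega
    all_goals
      left; exact CFProof.card_pedge (by omega) (by omega) (by omega)
  · exact ⟨CFProof.bigB k, CFProof.mem_Ek.mpr (Or.inl rfl),
      by rw [CFProof.card_bigB]; omega⟩
end
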